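/- Let X be a finite set with N elements, A : X × X → ℝ a symmetric matrix, and Ψ an N × m real matrix (rows indexed by X) with linearly independent columns. Suppose A is conditionally positive definite with respect to Ψ, i.e. for every nonzero a ∈ ℝ^X with Ψᵀa = 0 one has aᵀAa > 0. Then the (N+m) × (N+m) block matrix [[A, Ψ], [Ψᵀ, 0]] (with the m × m zero matrix in the lower-right block) is invertible. -/

import Mathlib

theorem saddle_point_matrix_invertible
    {X : Type*} [Fintype X] [DecidableEq X] (N m : ℕ)
    (hN : Fintype.card X = N)
    (A : Matrix X X ℝ) (hA : A.IsSymm)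
    (Ψ : Matrix X (Fin m) ℝ)
    (hΨ : LinearIndependent ℝ (fun k : Fin m => (fun ξ : X => Ψ ξ k)))
    (hcpd : ∀ a : X → ℝ, a ≠ 0 → Ψ.transpose.mulVec a = 0 →
      0 < dotProduct a (A.mulVec a)) :
    IsUnit (Matrix.fromBlocks A Ψ Ψ.transpose (0 : Matrix (Fin m) (Fin m) ℝ)) := by
  rw [← Matrix.mulVec_injective_iff_isUnit, ← Matrix.coe_mulVecLin]
  refine LinearMap.ker_eq_bot.mp (LinearMap.ker_eq_bot'.mpr ?_)
  intro v hv
  set a : X → ℝ := v ∘ Sum.inl with ha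
  set b : Fin m → ℝ := v ∘ Sum.inr with hb
  rw [Matrix.mulVecLin_apply, Matrix.fromBlocks_mulVec] at hv
  have h1 : A.mulVec a + Ψ.mulVec b = 0 := by
    funext i; exact congrFun hv (Sum.inl i)
  have h2 : Ψ.transpose.mulVec a = 0 := by
    funext j
    have := congrFun hv (Sum.inr j)
    simpa using this
  have haz : a = 0 := by
    by_contra hne
    have hpos := hcpd a hne h2
    have hd : dotProduct a (A.mulVec a) + dotProduct a (Ψ.mulVec b) = 0 := by
      rw [← dotProduct_add, h1, dotProduct_zero]
    have hz : dotProduct a (Ψ.mulVec b) = 0 := by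
      rw [Matrix.dotProduct_mulVec, ← Matrix.mulVec_transpose, h2, zero_dotProduct]
    linarith
  have hΨb : Ψ.mulVec b = 0 := by
    rw [haz, Matrix.mulVec_zero, zero_add] at h1; exact h1
  have hbz : b = 0 := by
    have := Fintype.linearIndependent_iff.mp hΨ b ?_
    · funext j; exact this j
    · funext i
      have := congrFun hΨb i
      simpa [Matrix.mulVec, dotProduct, mul_comm] using this
  funext i
  cases i with
  | inl i => exact congrFun haz i
  | inr j => exact congrFun hbz j
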